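/- Let P be the set of planar rooted trees, graded by the number of non-root vertices, with U(t) the sum of all planar rooted trees obtained by attaching a new edge and terminal vertex at each of the 2|t|+1 possible positions of t, and D(t) the sum of all trees obtained by deleting a terminal edge of t. Then (DU − UD)(t) = (2|t| + τ(t) + 1)·t for every planar rooted tree t, where τ(t) is the number of terminal (leaf) vertices of t. -/

import Mathlib

/-! Statement 18: planar rooted trees, encoded as balanced bracket
arrangements (Dyck words over `Bool`, `true` = up-step). A tree with `n`
non-root vertices corresponds to a balanced word of length `2n`; attaching a
new edge-and-leaf corresponds to inserting an adjacent pair `true, false`, and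
deleting a terminal edge corresponds to removing an adjacent pair
`true, false`. Leaves correspond to occurrences of the factor
`true, false`. -/

namespace PlanarTreeUD

/-- A balanced bracket arrangement (Dyck word). -/
def IsDyck (w : List Bool) : Prop :=
  w.count true = w.count false ∧
    ∀ i : ℕ, (w.take i).count false ≤ (w.take i).count true

/-- The positions of terminal edges: indices `i` with `w i = true` and
`w (i+1) = false`. -/
def leafPositions (w : List Bool) : Finset ℕ :=
  (Finset.range (w.length - 1)).filter fun i =>
    w.getD i false = true ∧ w.getD (i + 1) true = false

/-- The number of terminal (leaf) vertices `τ(t)`. -/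
def tau (w : List Bool) : ℕ := (leafPositions w).card

/-- `U(t)`: attach a new edge and terminal vertex at each of the `2|t|+1`
possible positions, i.e. insert an adjacent pair `true, false` at each of the
`length + 1` positions of the word. -/
noncomputable def Uvec (w : List Bool) : List Bool →₀ ℚ :=
  ∑ i ∈ Finset.range (w.length + 1),
    Finsupp.single (w.take i ++ true :: false :: w.drop i) 1

/-- `D(t)`: delete a terminal edge of `t` in each possible way, i.e. remove an
adjacent pair `true, false`. -/
noncomputable def Dvec (w : List Bool) : List Bool →₀ ℚ :=
  ∑ i ∈ leafPositions w, Finsupp.single (w.take i ++ w.drop (i + 2)) 1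

/-- The up operator. -/
noncomputable def Uop : (List Bool →₀ ℚ) →ₗ[ℚ] (List Bool →₀ ℚ) :=
  Finsupp.lsum ℚ fun w => LinearMap.toSpanSingleton ℚ _ (Uvec w)

/-- The down operator. -/
noncomputable def Dop : (List Bool →₀ ℚ) →ₗ[ℚ] (List Bool →₀ ℚ) :=
  Finsupp.lsum ℚ fun w => LinearMap.toSpanSingleton ℚ _ (Dvec w)

/-! ### Auxiliary machinery -/

/-- Prepend a letter, as a linear map on the free vector space. -/
noncomputable def M (c : Bool) : (List Bool →₀ ℚ) →ₗ[ℚ] (List Bool →₀ ℚ) :=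
  Finsupp.lmapDomain ℚ ℚ (c :: ·)

lemma M_single (c : Bool) (w : List Bool) (b : ℚ) :
    M c (Finsupp.single w b) = Finsupp.single (c :: w) b := by
  simp [M, Finsupp.lmapDomain_apply, Finsupp.mapDomain_single]

lemma Uop_single (w : List Bool) (b : ℚ) : Uop (Finsupp.single w b) = b • Uvec w := by
  simp [Uop, Finsupp.lsum_single, LinearMap.toSpanSingleton_apply]

lemma Dop_single (w : List Bool) (b : ℚ) : Dop (Finsupp.single w b) = b • Dvec w := by
  simp [Dop, Finsupp.lsum_single, LinearMap.toSpanSingleton_apply]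

/-- Inserting into `c :: z`. -/
lemma Uvec_cons (c : Bool) (z : List Bool) :
    Uvec (c :: z) = M c (Uvec z) + Finsupp.single (true :: false :: c :: z) 1 := by
  have h1 : Uvec (c :: z)
      = ∑ i ∈ Finset.range (z.length + 1 + 1),
          Finsupp.single ((c :: z).take i ++ true :: false :: (c :: z).drop i) (1 : ℚ) := by
    simp [Uvec]
  rw [h1, Finset.sum_range_succ']
  have h2 : ∀ i, (c :: z).take (i+1) ++ true :: false :: (c :: z).drop (i+1)
      = c :: (z.take i ++ true :: false :: z.drop i) := by
    intro i; simp
  have h3 : M c (Uvec z)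
      = ∑ i ∈ Finset.range (z.length + 1),
          Finsupp.single (c :: (z.take i ++ true :: false :: z.drop i)) (1 : ℚ) := by
    rw [Uvec, map_sum]
    exact Finset.sum_congr rfl fun i _ => M_single _ _ _
  rw [h3]
  have h4 : ∑ i ∈ Finset.range (z.length + 1),
        Finsupp.single ((c :: z).take (i+1) ++ true :: false :: (c :: z).drop (i+1)) (1:ℚ)
      = ∑ i ∈ Finset.range (z.length + 1),
        Finsupp.single (c :: (z.take i ++ true :: false :: z.drop i)) (1:ℚ) :=
    Finset.sum_congr rfl fun i _ => by rw [h2]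
  rw [h4]
  simp

lemma leafPositions_cons (c : Bool) (z : List Bool)
    (h : ¬(c = true ∧ z.getD 0 true = false)) :
    leafPositions (c :: z) = (leafPositions z).image (· + 1) := by
  ext i
  simp only [leafPositions, Finset.mem_image, Finset.mem_filter, Finset.mem_range]
  cases i with
  | zero =>
    constructor
    · rintro ⟨-, h1, h2⟩
      exact absurd ⟨by simpa using h1, by simpa using h2⟩ h
    · rintro ⟨j, -, hj⟩; omega
  | succ j =>
    constructor
    · rintro ⟨hr, h1, h2⟩
      refine ⟨j, ⟨by simp at hr; omega, by simpa using h1, by simpa using h2⟩, rfl⟩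
    · rintro ⟨j', ⟨hr, h1, h2⟩, hj⟩
      obtain rfl : j' = j := by omega
      exact ⟨by simp; omega, by simpa using h1, by simpa using h2⟩

lemma leafPositions_TF (z : List Bool) :
    leafPositions (true :: false :: z) = insert 0 ((leafPositions z).image (· + 2)) := by
  ext i
  simp only [leafPositions, Finset.mem_insert, Finset.mem_image, Finset.mem_filter,
    Finset.mem_range]
  match i with
  | 0 => simp
  | 1 => simp
  | (j+2) =>
    constructor
    · rintro ⟨hr, h1, h2⟩
      refine Or.inr ⟨j, ⟨by simp at hr; omega, by simpa using h1, by simpa using h2⟩, rfl⟩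
    · rintro (h | ⟨j', ⟨hr, h1, h2⟩, hj⟩)
      · omega
      · obtain rfl : j' = j := by omega
        exact ⟨by simp; omega, by simpa using h1, by simpa using h2⟩

lemma Dvec_cons (c : Bool) (z : List Bool)
    (h : ¬(c = true ∧ z.getD 0 true = false)) :
    Dvec (c :: z) = M c (Dvec z) := by
  rw [Dvec, leafPositions_cons c z h,
    Finset.sum_image (by intro x _ y _ hxy; simp only at hxy; omega)]
  rw [Dvec, map_sum]
  refine Finset.sum_congr rfl fun j _ => ?_
  rw [M_single]
  congr 1

lemma Dvec_TF (z : List Bool) :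
    Dvec (true :: false :: z) = Finsupp.single z 1 + M true (M false (Dvec z)) := by
  rw [Dvec, leafPositions_TF]
  rw [Finset.sum_insert (by simp)]
  congr 1
  rw [Finset.sum_image (by intro x _ y _ hxy; simp only at hxy; omega), Dvec, map_sum, map_sum]
  refine Finset.sum_congr rfl fun j _ => ?_
  rw [M_single, M_single]
  congr 1

lemma tau_cons (c : Bool) (z : List Bool)
    (h : ¬(c = true ∧ z.getD 0 true = false)) : tau (c :: z) = tau z := by
  rw [tau, leafPositions_cons c z h, Finset.card_image_of_injective _ (add_left_injective _)]
  rfl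

lemma tau_TF (z : List Bool) : tau (true :: false :: z) = tau z + 1 := by
  rw [tau, leafPositions_TF, Finset.card_insert_of_notMem (by simp),
    Finset.card_image_of_injective _ (add_left_injective _)]
  rfl

/-! ### Operator identities -/

lemma Uop_M (c : Bool) (f : List Bool →₀ ℚ) :
    Uop (M c f) = M c (Uop f) + M true (M false (M c f)) := by
  induction f using Finsupp.induction_linear with
  | zero => simp
  | add f g hf hg =>
    rw [map_add, map_add, hf, hg]
    simp only [map_add]
    abel
  | single a b =>
    simp only [M_single, Uop_single, Uvec_cons, smul_add, map_smul, map_add,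
      Finsupp.smul_single, smul_eq_mul, mul_one]

lemma Dop_MF (f : List Bool →₀ ℚ) : Dop (M false f) = M false (Dop f) := by
  induction f using Finsupp.induction_linear with
  | zero => simp
  | add f g hf hg => simp only [map_add, hf, hg]
  | single a b =>
    rw [M_single, Dop_single, Dop_single, map_smul,
      Dvec_cons false a (by simp)]

lemma Dop_MTF (f : List Bool →₀ ℚ) :
    Dop (M true (M false f)) = f + M true (M false (Dop f)) := by
  induction f using Finsupp.induction_linear with
  | zero => simp
  | add f g hf hg =>
    simp only [map_add, hf, hg]
    abel
  | single a b =>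
    rw [M_single, M_single, Dop_single, Dop_single, Dvec_TF, smul_add,
      map_smul, map_smul, Finsupp.smul_single, smul_eq_mul, mul_one]

lemma Dop_MTT (f : List Bool →₀ ℚ) :
    Dop (M true (M true f)) = M true (Dop (M true f)) := by
  induction f using Finsupp.induction_linear with
  | zero => simp
  | add f g hf hg => simp only [map_add, hf, hg]
  | single a b =>
    rw [M_single, M_single, Dop_single, Dop_single, map_smul,
      Dvec_cons true (true :: a) (by simp)]

/-! ### The main induction -/

lemma main : ∀ n (w : List Bool), w.length = n →
    Dop (Uvec w) - Uop (Dvec w) = ((w.length : ℚ) + tau w + 1) • Finsupp.single w 1 := by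
  intro n
  induction n using Nat.strong_induction_on with
  | _ n ih =>
  intro w hw
  match w with
  | [] =>
    have h1 : Uvec [] = Finsupp.single [true, false] 1 := by simp [Uvec]
    have h2 : Dvec ([] : List Bool) = 0 := by simp [Dvec, leafPositions]
    have h3 : leafPositions [true, false] = {0} := by decide
    have h4 : Dvec [true, false] = Finsupp.single [] 1 := by
      rw [Dvec, h3]; simp
    have h5 : tau ([] : List Bool) = 0 := by decide
    rw [h1, h2, Dop_single, h4, map_zero, h5]
    simp
  | [true] =>
    have h1 : Uvec [true]
        = Finsupp.single [true, false, true] 1 + Finsupp.single [true, true, false] 1 := by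
      rw [Uvec]
      rw [show ([true] : List Bool).length + 1 = 2 from rfl]
      rw [Finset.sum_range_succ, Finset.sum_range_one]
      simp
    have h2 : Dvec [true] = 0 := by simp [Dvec, leafPositions]
    have h3 : leafPositions [true, false, true] = {0} := by decide
    have h4 : leafPositions [true, true, false] = {1} := by decide
    have h5 : Dvec [true, false, true] = Finsupp.single [true] 1 := by
      rw [Dvec, h3]; simp
    have h6 : Dvec [true, true, false] = Finsupp.single [true] 1 := by
      rw [Dvec, h4]; simp
    have h7 : tau [true] = 0 := by decide
    rw [h1, h2, map_zero, map_add, Dop_single, Dop_single, h5, h6, h7]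
    simp

  | false :: x =>
    have hx := ih x.length (by simp at hw; omega) x rfl
    have hs : Finsupp.single (false :: x) (1 : ℚ) = M false (Finsupp.single x 1) :=
      (M_single _ _ _).symm
    have hDcons : Dvec (false :: x) = M false (Dvec x) := Dvec_cons false x (by simp)
    have expandU : Dop (Uvec (false :: x))
        = M false (Dop (Uvec x)) + Finsupp.single (false :: x) 1
          + M true (M false (M false (Dvec x))) := by
      rw [Uvec_cons, map_add, Dop_MF]
      rw [show Finsupp.single (true :: false :: false :: x) (1:ℚ)
          = M true (M false (Finsupp.single (false :: x) 1)) from by rw [M_single, M_single]]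
      rw [Dop_MTF, Dop_single, one_smul, hDcons]
      abel
    have expandD : Uop (Dvec (false :: x))
        = M false (Uop (Dvec x)) + M true (M false (M false (Dvec x))) := by
      rw [hDcons, Uop_M]
    rw [expandU, expandD]
    have key : M false (Dop (Uvec x)) + Finsupp.single (false :: x) 1
          + M true (M false (M false (Dvec x)))
          - (M false (Uop (Dvec x)) + M true (M false (M false (Dvec x))))
        = M false (Dop (Uvec x) - Uop (Dvec x)) + Finsupp.single (false :: x) 1 := by
      rw [map_sub]; abel
    rw [key, hx, map_smul, M_single]
    have htau : tau (false :: x) = tau x := tau_cons false x (by simp)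
    have hco : (((false :: x).length : ℚ) + tau (false :: x) + 1)
        = ((x.length : ℚ) + tau x + 1) + 1 := by
      rw [htau]; push_cast [List.length_cons]; ring
    rw [hco]; module
  | true :: true :: y =>
    set x := true :: y with hxdef
    have hx := ih x.length (by simp [hxdef] at hw ⊢; omega) x rfl
    have hheadx : ¬((true : Bool) = true ∧ x.getD 0 true = false) := by simp [hxdef]
    have hDcons : Dvec (true :: x) = M true (Dvec x) := Dvec_cons true x hheadx
    have hUx : Uvec x = M true (Uvec y + Finsupp.single (false :: true :: y) 1) := by
      rw [map_add, M_single, hxdef, Uvec_cons]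
    have hDMT : Dop (M true (Uvec x)) = M true (Dop (Uvec x)) := by
      rw [hUx, Dop_MTT, ← hUx]
    have expandU : Dop (Uvec (true :: x))
        = M true (Dop (Uvec x)) + Finsupp.single (true :: x) 1
          + M true (M false (M true (Dvec x))) := by
      rw [Uvec_cons, map_add, hDMT]
      rw [show Finsupp.single (true :: false :: true :: x) (1:ℚ)
          = M true (M false (Finsupp.single (true :: x) 1)) from by rw [M_single, M_single]]
      rw [Dop_MTF, Dop_single, one_smul, hDcons]
      abel
    have expandD : Uop (Dvec (true :: x))
        = M true (Uop (Dvec x)) + M true (M false (M true (Dvec x))) := by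
      rw [hDcons, Uop_M]
    rw [expandU, expandD]
    have key : M true (Dop (Uvec x)) + Finsupp.single (true :: x) 1
          + M true (M false (M true (Dvec x)))
          - (M true (Uop (Dvec x)) + M true (M false (M true (Dvec x))))
        = M true (Dop (Uvec x) - Uop (Dvec x)) + Finsupp.single (true :: x) 1 := by
      rw [map_sub]; abel
    rw [key, hx, map_smul, M_single]
    have htau : tau (true :: x) = tau x := tau_cons true x hheadx
    have hco : (((true :: x).length : ℚ) + tau (true :: x) + 1)
        = ((x.length : ℚ) + tau x + 1) + 1 := by
      rw [htau]; push_cast [List.length_cons]; ring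
    rw [hco]; module
  | true :: false :: y =>
    have hy := ih y.length (by simp at hw; omega) y rfl
    set s := Finsupp.single y (1 : ℚ) with hsdef
    have hw1 : Finsupp.single (true :: false :: y) (1:ℚ) = M true (M false s) := by
      rw [hsdef, M_single, M_single]
    have hUexp : Uvec (true :: false :: y)
        = M true (M false (Uvec y)) + M true (M true (M false (M false s)))
          + M true (M false (M true (M false s))) := by
      rw [Uvec_cons, Uvec_cons, map_add]
      simp only [hsdef, M_single]
    have hDs : Dop s = Dvec y := by rw [hsdef, Dop_single, one_smul]
    have expandU : Dop (Uvec (true :: false :: y))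
        = Uvec y + M true (M false (Dop (Uvec y)))
          + M true (M true (M false (M false (Dvec y))))
          + M true (M false (M true (M false (Dvec y))))
          + (3 : ℚ) • Finsupp.single (true :: false :: y) 1 := by
      rw [hUexp, map_add, map_add]
      rw [Dop_MTF]
      rw [Dop_MTT, Dop_MTF, Dop_MF, hDs]
      rw [Dop_MTF, Dop_MTF, hDs]
      rw [← hw1]
      simp only [map_add]
      rw [show (3 : ℚ) • Finsupp.single (true :: false :: y) (1:ℚ)
          = Finsupp.single (true :: false :: y) 1 + Finsupp.single (true :: false :: y) 1
            + Finsupp.single (true :: false :: y) 1 from by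
            rw [show (3:ℚ) = 1 + 1 + 1 from by norm_num, add_smul, add_smul, one_smul]]
      rw [hw1]
      abel
    have expandD : Uop (Dvec (true :: false :: y))
        = Uvec y + M true (M false (Uop (Dvec y)))
          + M true (M true (M false (M false (Dvec y))))
          + M true (M false (M true (M false (Dvec y)))) := by
      rw [Dvec_TF, map_add, ← hsdef, Uop_single, one_smul]
      rw [Uop_M, Uop_M]
      simp only [map_add]
      abel
    rw [expandU, expandD]
    have key : Uvec y + M true (M false (Dop (Uvec y)))
          + M true (M true (M false (M false (Dvec y))))
          + M true (M false (M true (M false (Dvec y))))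
          + (3 : ℚ) • Finsupp.single (true :: false :: y) 1
          - (Uvec y + M true (M false (Uop (Dvec y)))
            + M true (M true (M false (M false (Dvec y))))
            + M true (M false (M true (M false (Dvec y)))))
        = M true (M false (Dop (Uvec y) - Uop (Dvec y)))
          + (3 : ℚ) • Finsupp.single (true :: false :: y) 1 := by
      rw [map_sub, map_sub]; abel
    rw [key, hy, map_smul, map_smul, M_single, M_single]
    have htau : tau (true :: false :: y) = tau y + 1 := tau_TF y
    have hco : (((true :: false :: y).length : ℚ) + tau (true :: false :: y) + 1)
        = ((y.length : ℚ) + tau y + 1) + 3 := by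
      rw [htau]; push_cast [List.length_cons]; ring
    rw [hco]; module

/-- `(DU − UD)(t) = (2|t| + τ(t) + 1)·t` for every planar rooted tree `t`
(note `2|t| = length of the word`). -/
theorem commutator_eq (w : List Bool) (hw : IsDyck w) :
    Dop (Uop (Finsupp.single w 1)) - Uop (Dop (Finsupp.single w 1)) =
      ((w.length : ℚ) + tau w + 1) • Finsupp.single w 1 := by
  rw [Uop_single, Dop_single, one_smul, one_smul]
  exact main w.length w rfl

end PlanarTreeUD
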